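/- Let V ∈ ℝ^{n×m} with n ≤ m and no ties within any row. Then the output of the soft one-round algorithm sr_τ(V) converges entrywise as τ → 0⁺ to the output r(V) of the exact one-round selection, where r(V)_{ij} = 1 iff j is the maximizer of v_{ij'} over the set C_i of goods remaining after agents 1,...,i−1 have picked. -/
import Mathlib


open Finset

/-- Tie-breaking argmax: the smallest index in `C` attaining the maximum of `v` on `C`. -/
noncomputable def pickTB (v : ℕ → ℝ) (C : Finset ℕ) : ℕ :=
  if h : (C.filter fun j => ∀ j' ∈ C, v j' ≤ v j).Nonempty
  then (C.filter fun j => ∀ j' ∈ C, v j' ≤ v j).min' h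
  else 0

/-- softmax over goods `0, ..., m-1`. -/
noncomputable def softmaxOn (m : ℕ) (z : ℕ → ℝ) (j : ℕ) : ℝ :=
  Real.exp (z j) / ∑ j' ∈ Finset.range m, Real.exp (z j')

/-- minimum entry of a row over goods `0, ..., m-1`. -/
noncomputable def rowMin (m : ℕ) (vi : ℕ → ℝ) : ℝ :=
  if h : (Finset.range m).Nonempty then (Finset.range m).inf' h vi else 0

/-- State of the soft one-round algorithm `sr_τ` after `i` iterations:
`(y^{(i)}, c^{(i)})`, where `c^{(0)} = 1`, and at iteration `i+1` (agent `i`, 0-indexed)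
`y = softmax(((V[i] − min(V[i])·1 + 1) ⊙ c)/τ)` and `c ← (1 − y) ⊙ c`. -/
noncomputable def srState (τ : ℝ) (v : ℕ → ℕ → ℝ) (m : ℕ) : ℕ → (ℕ → ℝ) × (ℕ → ℝ)
  | 0 => (fun _ => 0, fun _ => 1)
  | i + 1 =>
    let c := (srState τ v m i).2
    let y := softmaxOn m fun j => (v i j - rowMin m (v i) + 1) * c j / τ
    (y, fun j => (1 - y j) * c j)

/-- Row `i` (0-indexed) of the output matrix `R` of the soft one-round algorithm. -/
noncomputable def srOut (τ : ℝ) (v : ℕ → ℕ → ℝ) (m : ℕ) (i : ℕ) : ℕ → ℝ :=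
  (srState τ v m (i + 1)).1

/-- Remaining goods `C_i` in the exact one-round procedure (0-indexed: `C 0 = [m]`). -/
noncomputable def oneRoundC (v : ℕ → ℕ → ℝ) (m : ℕ) : ℕ → Finset ℕ
  | 0 => Finset.range m
  | i + 1 => (oneRoundC v m i).erase (pickTB (v i) (oneRoundC v m i))

/-- Output matrix of the exact one-round procedure: `r(V)_{ij} = 1` iff agent `i`
picks good `j` (the maximizer of `v i` over `C_i`). -/
noncomputable def oneRoundMat (v : ℕ → ℕ → ℝ) (m : ℕ) (i j : ℕ) : ℝ :=
  if j = pickTB (v i) (oneRoundC v m i) then 1 else 0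

open Filter Topology

lemma pickTB_spec (v : ℕ → ℝ) (C : Finset ℕ) (hC : C.Nonempty) :
    pickTB v C ∈ C ∧ ∀ j ∈ C, v j ≤ v (pickTB v C) := by
  obtain ⟨x, hx, hmax⟩ := C.exists_max_image v hC
  have hne : (C.filter fun j => ∀ j' ∈ C, v j' ≤ v j).Nonempty :=
    ⟨x, mem_filter.2 ⟨hx, hmax⟩⟩
  have hmem := (C.filter fun j => ∀ j' ∈ C, v j' ≤ v j).min'_mem hne
  rw [mem_filter] at hmem
  rw [pickTB, dif_pos hne]
  exact ⟨hmem.1, hmem.2⟩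

lemma div_tendsto_atBot {f : ℝ → ℝ} {d : ℝ} (hd : d < 0)
    (hf : Tendsto f (𝓝[>] (0:ℝ)) (𝓝 d)) :
    Tendsto (fun τ => f τ / τ) (𝓝[>] (0:ℝ)) atBot := by
  simpa [div_eq_mul_inv] using hf.neg_mul_atTop hd tendsto_inv_nhdsGT_zero

/-- Key softmax limit lemma. -/
lemma softmax_tendsto (m : ℕ) (z : ℝ → ℕ → ℝ) (L : ℕ → ℝ) (j0 : ℕ) (hj0 : j0 < m)
    (hz : ∀ j, j < m → Tendsto (fun τ => z τ j) (𝓝[>] (0:ℝ)) (𝓝 (L j)))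
    (hmax : ∀ j, j < m → j ≠ j0 → L j < L j0) (j : ℕ) (hj : j < m) :
    Tendsto (fun τ => softmaxOn m (fun k => z τ k / τ) j) (𝓝[>] (0:ℝ))
      (𝓝 (if j = j0 then 1 else 0)) := by
  set g : ℝ → ℕ → ℝ := fun τ k => Real.exp ((z τ k - z τ j0) / τ) with hg
  have hgt : ∀ k, k < m → Tendsto (fun τ => g τ k) (𝓝[>] (0:ℝ))
      (𝓝 (if k = j0 then 1 else 0)) := by
    intro k hk
    by_cases hkj : k = j0
    · subst hkj
      simpa [hg] using (tendsto_const_nhds : Tendsto (fun _ : ℝ => (1:ℝ)) _ _)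
    · rw [if_neg hkj]
      have hdiff : Tendsto (fun τ => z τ k - z τ j0) (𝓝[>] (0:ℝ))
          (𝓝 (L k - L j0)) := (hz k hk).sub (hz j0 hj0)
      have := div_tendsto_atBot (sub_neg.2 (hmax k hk hkj)) hdiff
      exact Real.tendsto_exp_atBot.comp this
  have heq : ∀ τ : ℝ, softmaxOn m (fun k => z τ k / τ) j
      = g τ j / ∑ k ∈ Finset.range m, g τ k := by
    intro τ
    have h1 : ∀ k, g τ k = Real.exp (z τ k / τ) / Real.exp (z τ j0 / τ) := by
      intro k; rw [hg]; simp [sub_div, Real.exp_sub]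
    rw [softmaxOn]
    simp only [h1, ← Finset.sum_div]
    rw [div_div_div_cancel_right₀ (Real.exp_ne_zero _)]
  have hsum : Tendsto (fun τ => ∑ k ∈ Finset.range m, g τ k) (𝓝[>] (0:ℝ))
      (𝓝 (∑ k ∈ Finset.range m, if k = j0 then (1:ℝ) else 0)) := by
    apply tendsto_finset_sum
    intro k hk
    exact hgt k (Finset.mem_range.1 hk)
  have hsumval : (∑ k ∈ Finset.range m, if k = j0 then (1:ℝ) else 0) = 1 := by
    rw [Finset.sum_ite_eq' (Finset.range m) j0 (fun _ => (1:ℝ))]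
    simp [Finset.mem_range.2 hj0]
  rw [hsumval] at hsum
  have := (hgt j hj).div hsum one_ne_zero
  simp only [div_one] at this
  exact this.congr fun τ => (heq τ).symm

lemma rowMin_le (m : ℕ) (vi : ℕ → ℝ) (j : ℕ) (hj : j < m) : rowMin m vi ≤ vi j := by
  have h : (Finset.range m).Nonempty := ⟨j, Finset.mem_range.2 hj⟩
  rw [rowMin, dif_pos h]
  exact Finset.inf'_le _ (Finset.mem_range.2 hj)

lemma oneRoundC_subset (v : ℕ → ℕ → ℝ) (m : ℕ) : ∀ i, oneRoundC v m i ⊆ Finset.range m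
  | 0 => by simp [oneRoundC]
  | i + 1 => (Finset.erase_subset _ _).trans (oneRoundC_subset v m i)

lemma oneRoundC_card (v : ℕ → ℕ → ℝ) (m : ℕ) : ∀ i, i ≤ m → (oneRoundC v m i).card = m - i
  | 0, _ => by simp [oneRoundC]
  | i + 1, h => by
    have hi : i ≤ m := Nat.le_of_succ_le h
    have hcard := oneRoundC_card v m i hi
    have hne : (oneRoundC v m i).Nonempty := by
      rw [← Finset.card_pos, hcard]; omega
    rw [oneRoundC, Finset.card_erase_of_mem (pickTB_spec (v i) _ hne).1, hcard]
    omega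

lemma srStep (n m : ℕ) (v : ℕ → ℕ → ℝ) (hnm : n ≤ m)
    (hties : ∀ i, i < n → ∀ j, j < m → ∀ j', j' < m → j ≠ j' → v i j ≠ v i j')
    (i : ℕ) (hi : i < n)
    (hc : ∀ j, j < m → Tendsto (fun τ => (srState τ v m i).2 j) (𝓝[>] (0:ℝ))
      (𝓝 (if j ∈ oneRoundC v m i then 1 else 0))) :
    ∀ j, j < m → Tendsto (fun τ => (srState τ v m (i+1)).1 j) (𝓝[>] (0:ℝ))
      (𝓝 (if j = pickTB (v i) (oneRoundC v m i) then 1 else 0)) := by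
  intro j hj
  set C := oneRoundC v m i with hC
  have hCne : C.Nonempty := by
    rw [← Finset.card_pos, hC, oneRoundC_card v m i (le_of_lt (lt_of_lt_of_le hi hnm))]
    omega
  obtain ⟨hpmem, hpmax⟩ := pickTB_spec (v i) C hCne
  set p := pickTB (v i) C with hp
  have hpm : p < m := Finset.mem_range.1 (oneRoundC_subset v m i hpmem)
  set L : ℕ → ℝ := fun k => (v i k - rowMin m (v i) + 1) * (if k ∈ C then 1 else 0) with hL
  have hz : ∀ k, k < m → Tendsto
      (fun τ => (v i k - rowMin m (v i) + 1) * (srState τ v m i).2 k)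
      (𝓝[>] (0:ℝ)) (𝓝 (L k)) := fun k hk => (hc k hk).const_mul _
  have hmax : ∀ k, k < m → k ≠ p → L k < L p := by
    intro k hk hkp
    have hLp : L p = v i p - rowMin m (v i) + 1 := by rw [hL]; simp [hpmem]
    have hLp1 : (1:ℝ) ≤ L p := by
      rw [hLp]
      have := rowMin_le m (v i) p hpm
      linarith
    by_cases hkC : k ∈ C
    · have hle : v i k ≤ v i p := hpmax k hkC
      have hne : v i k ≠ v i p := hties i hi k hk p hpm hkp
      rw [hL]; simp only [if_pos hkC, if_pos hpmem, mul_one]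
      have : v i k < v i p := lt_of_le_of_ne hle hne
      linarith
    · rw [hL]; simp only [if_neg hkC, mul_zero]
      calc (0:ℝ) < 1 := one_pos
        _ ≤ L p := hLp1
  have := softmax_tendsto m
    (fun τ k => (v i k - rowMin m (v i) + 1) * (srState τ v m i).2 k) L p hpm hz hmax j hj
  simpa [srState, mul_div_assoc] using this

lemma srKey (n m : ℕ) (v : ℕ → ℕ → ℝ) (hnm : n ≤ m)
    (hties : ∀ i, i < n → ∀ j, j < m → ∀ j', j' < m → j ≠ j' → v i j ≠ v i j') :
    ∀ i, i ≤ n → ∀ j, j < m → Tendsto (fun τ => (srState τ v m i).2 j) (𝓝[>] (0:ℝ))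
      (𝓝 (if j ∈ oneRoundC v m i then 1 else 0)) := by
  intro i
  induction i with
  | zero =>
    intro _ j hj
    simp only [srState, oneRoundC, Finset.mem_range, hj, if_true]
    exact tendsto_const_nhds
  | succ i ih =>
    intro hin j hj
    have hi : i < n := lt_of_lt_of_le (Nat.lt_succ_self i) hin
    have hc := ih (le_of_lt hi)
    have hy := srStep n m v hnm hties i hi hc j hj
    set p := pickTB (v i) (oneRoundC v m i) with hp
    have hgoal : Tendsto (fun τ => (1 - (srState τ v m (i+1)).1 j) * (srState τ v m i).2 j)
        (𝓝[>] (0:ℝ))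
        (𝓝 ((1 - (if j = p then 1 else 0)) * (if j ∈ oneRoundC v m i then 1 else 0))) :=
      ((tendsto_const_nhds.sub hy)).mul (hc j hj)
    have hval : (1 - (if j = p then (1:ℝ) else 0)) * (if j ∈ oneRoundC v m i then 1 else 0)
        = if j ∈ oneRoundC v m (i+1) then 1 else 0 := by
      by_cases h1 : j = p <;> by_cases h2 : j ∈ oneRoundC v m i <;>
        simp [oneRoundC, Finset.mem_erase, h1, h2, ← hp]
    rw [hval] at hgoal
    refine hgoal.congr fun τ => ?_
    simp [srState]

/-- for `n ≤ m` and no ties within any row of `V`, the soft one-round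
output `sr_τ(V)` converges entrywise, as `τ → 0⁺`, to the exact one-round output `r(V)`. -/
theorem srOut_tendsto_oneRound (n m : ℕ) (v : ℕ → ℕ → ℝ)
    (hn : 0 < n) (hnm : n ≤ m)
    (hties : ∀ i, i < n → ∀ j, j < m → ∀ j', j' < m → j ≠ j' → v i j ≠ v i j')
    (i : ℕ) (hi : i < n) (j : ℕ) (hj : j < m) :
    Tendsto (fun τ : ℝ => srOut τ v m i j)
      (nhdsWithin 0 (Set.Ioi 0)) (nhds (oneRoundMat v m i j)) := by
  have := srStep n m v hnm hties i hi (srKey n m v hnm hties i (le_of_lt hi)) j hj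
  simpa [srOut, oneRoundMat] using this
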